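/- Fix r > 0 and 0 < α ≤ r. The function f(θ) = α²·θ + (α² − r²)·arcsin( α·sin θ / √(r² + α² − 2αr·cos θ) ) + α·r·sin θ is monotone nondecreasing on the interval [0, arccos(α/(2r))]. -/

import Mathlib

open Real

private lemma lune_hasDerivAt (r α : ℝ) (hr : 0 < r) (hα : 0 < α) (hlt : α < r) (x : ℝ) :
    HasDerivAt (fun θ : ℝ =>
        α ^ 2 * θ
          + (α ^ 2 - r ^ 2) *
              Real.arcsin (α * Real.sin θ /
                Real.sqrt (r ^ 2 + α ^ 2 - 2 * α * r * Real.cos θ))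
          + α * r * Real.sin θ)
      (2 * α ^ 2 * r ^ 2 * (Real.sin x) ^ 2 / (r ^ 2 + α ^ 2 - 2 * α * r * Real.cos x)) x := by
  have hD : ∀ y : ℝ, 0 < r ^ 2 + α ^ 2 - 2 * α * r * Real.cos y := by
    intro y
    nlinarith [Real.cos_le_one y, sq_nonneg (r - α), mul_pos hα hr]
  set D := r ^ 2 + α ^ 2 - 2 * α * r * Real.cos x with hDdef
  have hDpos : 0 < D := hD x
  have hsd : 0 < Real.sqrt D := Real.sqrt_pos.mpr hDpos
  have hsd2 : Real.sqrt D ^ 2 = D := Real.sq_sqrt hDpos.le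
  set s := Real.sin x
  set c := Real.cos x
  have hsc : s ^ 2 + c ^ 2 = 1 := Real.sin_sq_add_cos_sq x
  have hrc : 0 < r - α * c := by nlinarith [Real.cos_le_one x, Real.neg_one_le_cos x]
  have hDd : HasDerivAt (fun θ : ℝ => r ^ 2 + α ^ 2 - 2 * α * r * Real.cos θ)
      (2 * α * r * s) x := by
    have := ((Real.hasDerivAt_cos x).const_mul (2 * α * r)).const_sub (r ^ 2 + α ^ 2)
    refine this.congr_deriv (Eq.symm ?_)
    simp [s]
  have hsqrt : HasDerivAt (fun θ : ℝ => Real.sqrt (r ^ 2 + α ^ 2 - 2 * α * r * Real.cos θ))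
      (2 * α * r * s / (2 * Real.sqrt D)) x := hDd.sqrt hDpos.ne'
  have hnum : HasDerivAt (fun θ : ℝ => α * Real.sin θ) (α * c) x :=
    (Real.hasDerivAt_sin x).const_mul α
  have hg : HasDerivAt (fun θ : ℝ => α * Real.sin θ /
        Real.sqrt (r ^ 2 + α ^ 2 - 2 * α * r * Real.cos θ))
      ((α * c * Real.sqrt D - α * s * (2 * α * r * s / (2 * Real.sqrt D))) / Real.sqrt D ^ 2) x :=
    hnum.div hsqrt hsd.ne'
  set gx := α * s / Real.sqrt D with hgx
  have hgx2 : gx ^ 2 < 1 := by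
    rw [hgx, div_pow, hsd2, div_lt_one hDpos]
    nlinarith [hrc]
  have h1 : gx ≠ -1 := by intro h; rw [h] at hgx2; norm_num at hgx2
  have h2 : gx ≠ 1 := by intro h; rw [h] at hgx2; norm_num at hgx2
  have harc := (Real.hasDerivAt_arcsin h1 h2).comp x hg
  have hsub : Real.sqrt (1 - gx ^ 2) = (r - α * c) / Real.sqrt D := by
    have h : 1 - gx ^ 2 = ((r - α * c) / Real.sqrt D) ^ 2 := by
      rw [hgx, div_pow, div_pow, hsd2]
      field_simp
      nlinarith [hsc]
    rw [h, Real.sqrt_sq (by positivity)]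
  have hinner : α * c * Real.sqrt D - α * s * (2 * α * r * s / (2 * Real.sqrt D))
      = α * (r * c - α) * (r - α * c) / Real.sqrt D := by
    rw [eq_div_iff hsd.ne']
    field_simp
    linear_combination c * hsd2 + c * hDdef - (α * r) * hsc
  have e1 : 1 / Real.sqrt (1 - gx ^ 2) *
      ((α * c * Real.sqrt D - α * s * (2 * α * r * s / (2 * Real.sqrt D))) / Real.sqrt D ^ 2)
      = α * (r * c - α) / D := by
    rw [hsub, hinner, hsd2, one_div_div]
    field_simp
  have hfinal := (((hasDerivAt_id x).const_mul (α ^ 2)).add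
      (harc.const_mul (α ^ 2 - r ^ 2))).add ((Real.hasDerivAt_sin x).const_mul (α * r))
  refine hfinal.congr_deriv (Eq.symm ?_)
  rw [e1]
  have hcc : Real.cos x = c := rfl
  rw [hcc]
  field_simp
  linear_combination (2*α*r^2) * hsc + (-(α^2 + α*r*c)) * hDdef
/-- The lune-area function `f(θ) = α²θ + (α² − r²)·arcsin(α sin θ / √(r² + α² − 2αr cos θ))
+ αr sin θ` is monotone nondecreasing on `[0, arccos(α/(2r))]`. -/
theorem lune_area_monotoneOn (r α : ℝ) (hr : 0 < r) (hα : 0 < α) (hαr : α ≤ r) :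
    MonotoneOn
      (fun θ : ℝ =>
        α ^ 2 * θ
          + (α ^ 2 - r ^ 2) *
              Real.arcsin (α * Real.sin θ /
                Real.sqrt (r ^ 2 + α ^ 2 - 2 * α * r * Real.cos θ))
          + α * r * Real.sin θ)
      (Set.Icc 0 (Real.arccos (α / (2 * r)))) := by
  rcases eq_or_lt_of_le hαr with heq | hlt
  · -- α = r : the arcsin term has coefficient 0
    subst heq
    have hfun : (fun θ : ℝ =>
        α ^ 2 * θ
          + (α ^ 2 - α ^ 2) *
              Real.arcsin (α * Real.sin θ /
                Real.sqrt (α ^ 2 + α ^ 2 - 2 * α * α * Real.cos θ))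
          + α * α * Real.sin θ) = fun θ : ℝ => α ^ 2 * θ + α * α * Real.sin θ := by
      funext θ; ring
    rw [hfun]
    have hd : ∀ y : ℝ, HasDerivAt (fun θ : ℝ => α ^ 2 * θ + α * α * Real.sin θ)
        (α ^ 2 * 1 + α * α * Real.cos y) y := fun y =>
      ((hasDerivAt_id y).const_mul (α ^ 2)).add ((Real.hasDerivAt_sin y).const_mul (α * α))
    refine (monotone_of_deriv_nonneg (fun y => (hd y).differentiableAt) fun y => ?_).monotoneOn _
    rw [(hd y).deriv]
    nlinarith [Real.neg_one_le_cos y]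
  · -- α < r : f is monotone on all of ℝ, since f' = 2α²r²sin²θ/D ≥ 0
    have hD : ∀ y : ℝ, 0 < r ^ 2 + α ^ 2 - 2 * α * r * Real.cos y := by
      intro y
      nlinarith [Real.cos_le_one y, sq_nonneg (r - α), mul_pos hα hr]
    refine (monotone_of_deriv_nonneg
      (fun y => (lune_hasDerivAt r α hr hα hlt y).differentiableAt) fun y => ?_).monotoneOn _
    rw [(lune_hasDerivAt r α hr hα hlt y).deriv]
    exact div_nonneg (by positivity) (hD y).le
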